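/- If an n×n complex matrix T is a commutator of two square-zero matrices, then T is similar to -T. -/

import Mathlib

open Module Submodule

section Aux

variable {V : Type} [AddCommGroup V] [Module ℂ V]

/-- Glue anticonjugating automorphisms on two complementary invariant subspaces. -/
private lemma glue_aux (f : Module.End ℂ V) {p q : Submodule ℂ V}
    (h : IsCompl p q) (hfp : ∀ x ∈ p, f x ∈ p) (hfq : ∀ x ∈ q, f x ∈ q)
    (gp : p ≃ₗ[ℂ] p) (gq : q ≃ₗ[ℂ] q)
    (hgp : ∀ x : p, gp (f.restrict hfp x) = -(f.restrict hfp (gp x)))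
    (hgq : ∀ x : q, gq (f.restrict hfq x) = -(f.restrict hfq (gq x))) :
    ∃ g : V ≃ₗ[ℂ] V, ∀ x, g (f x) = -(f (g x)) := by
  classical
  set e := Submodule.prodEquivOfIsCompl p q h with he
  refine ⟨e.symm.trans ((gp.prodCongr gq).trans e), ?_⟩
  have key : ∀ x : V, (e.symm.trans ((gp.prodCongr gq).trans e)) x
      = ↑(gp (e.symm x).1) + ↑(gq (e.symm x).2) := by
    intro x
    simp only [LinearEquiv.trans_apply, LinearEquiv.prodCongr_apply]
    rfl
  have keyP : ∀ (x : V) (hx : x ∈ p),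
      (e.symm.trans ((gp.prodCongr gq).trans e)) x = ↑(gp ⟨x, hx⟩) := by
    intro x hx
    rw [key]
    have : e.symm x = ((⟨x, hx⟩ : ↥p), (0 : q)) := Submodule.prodEquivOfIsCompl_symm_apply_left p q h (⟨x, hx⟩ : ↥p)
    rw [this]
    simp
  have keyQ : ∀ (x : V) (hx : x ∈ q),
      (e.symm.trans ((gp.prodCongr gq).trans e)) x = ↑(gq ⟨x, hx⟩) := by
    intro x hx
    rw [key]
    have : e.symm x = ((0 : p), (⟨x, hx⟩ : ↥q)) := Submodule.prodEquivOfIsCompl_symm_apply_right p q h (⟨x, hx⟩ : ↥q)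
    rw [this]
    simp
  intro x
  -- decompose x
  have hx : x ∈ p ⊔ q := by rw [h.codisjoint.eq_top]; trivial
  obtain ⟨y, hy, z, hz, rfl⟩ := Submodule.mem_sup.mp hx
  have hy' := keyP y hy
  have hz' := keyQ z hz
  have hfy := keyP (f y) (hfp y hy)
  have hfz := keyQ (f z) (hfq z hz)
  rw [map_add, map_add, map_add, hy', hz', hfy, hfz]
  have e1 : (⟨f y, hfp y hy⟩ : p) = f.restrict hfp ⟨y, hy⟩ := rfl
  have e2 : (⟨f z, hfq z hz⟩ : q) = f.restrict hfq ⟨z, hz⟩ := rfl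
  rw [e1, e2, hgp, hgq]
  have c1 : ((-(f.restrict hfp (gp ⟨y, hy⟩)) : p) : V) = -(f ↑(gp ⟨y, hy⟩)) := by
    simp [LinearMap.restrict_apply]
  have c2 : ((-(f.restrict hfq (gq ⟨z, hz⟩)) : q) : V) = -(f ↑(gq ⟨z, hz⟩)) := by
    simp [LinearMap.restrict_apply]
  rw [c1, c2, map_add, neg_add]

/-- A nilpotent endomorphism is conjugate to its negative. -/
private lemma nilp_aux : ∀ (d : ℕ) (V : Type) [AddCommGroup V] [Module ℂ V]
    [FiniteDimensional ℂ V] (f : Module.End ℂ V), finrank ℂ V ≤ d → (∃ m, f ^ m = 0) →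
    ∃ g : V ≃ₗ[ℂ] V, ∀ x, g (f x) = -(f (g x)) := by
  intro d
  induction d with
  | zero =>
    intro V _ _ _ f hrank _
    have : Subsingleton V := by
      rw [← Module.finrank_zero_iff (R := ℂ)]
      omega
    exact ⟨LinearEquiv.refl ℂ V, fun x => Subsingleton.elim _ _⟩
  | succ d IH =>
    intro V _ _ _ f hrank hnil
    classical
    by_cases hf0 : f = 0
    · exact ⟨LinearEquiv.refl ℂ V, fun x => by simp [hf0]⟩
    set k := Nat.find hnil with hkdef
    have hk : f ^ k = 0 := Nat.find_spec hnil
    have hk0 : k ≠ 0 := by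
      intro h
      rw [h, pow_zero] at hk
      apply hf0
      calc f = 1 * f := (one_mul f).symm
      _ = 0 * f := by rw [hk]
      _ = 0 := zero_mul f
    have hkm : f ^ (k - 1) ≠ 0 := Nat.find_min hnil (by rw [← hkdef]; omega)
    obtain ⟨v, hv⟩ : ∃ v, (f ^ (k - 1)) v ≠ 0 := by
      by_contra hc
      push_neg at hc
      exact hkm (LinearMap.ext hc)
    obtain ⟨φ, hφ⟩ : ∃ φ : Module.Dual ℂ V, φ ((f ^ (k - 1)) v) ≠ 0 := by
      by_contra hc
      push_neg at hc
      exact hv ((Module.forall_dual_apply_eq_zero_iff ℂ _).mp hc)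
    set w : Fin k → V := fun i => (f ^ (i : ℕ)) v with hw
    -- high powers kill v
    have hkill : ∀ e : ℕ, k ≤ e → (f ^ e) v = 0 := by
      intro e he
      have : f ^ e = f ^ (e - k) * f ^ k := by rw [← pow_add]; congr 1; omega
      rw [this, Module.End.mul_apply, hk]
      simp
    -- the key coefficient-vanishing computation
    have hkey : ∀ (c : Fin k → ℂ) (x : V), (∑ i, c i • w i) = x →
        (∀ j : ℕ, j < k → φ ((f ^ j) x) = 0) → ∀ i, c i = 0 := by
      intro c x hx hz
      suffices H : ∀ m : ℕ, ∀ i : Fin k, (i : ℕ) = m → c i = 0 by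
        intro i; exact H i i rfl
      intro m
      induction m using Nat.strong_induction_on with
      | _ m IHm =>
        intro i him
        have him' : m < k := him ▸ i.2
        have hsum : φ ((f ^ (k - 1 - m)) x) = ∑ j : Fin k, c j * φ ((f ^ (k - 1 - m + j)) v) := by
          rw [← hx, map_sum, map_sum]
          congr 1
          ext j
          rw [map_smul, map_smul, smul_eq_mul]
          congr 2
          rw [hw]
          simp only
          rw [← Module.End.mul_apply, ← pow_add]
        have hterm : ∀ j : Fin k, j ≠ i → c j * φ ((f ^ (k - 1 - m + j)) v) = 0 := by
          intro j hj
          rcases lt_or_ge (j : ℕ) m with hlt | hge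
          · rw [IHm j hlt j rfl, zero_mul]
          · have hgt : m < (j : ℕ) := by
              rcases lt_or_eq_of_le hge with h' | h'
              · exact h'
              · exact absurd (Fin.ext (him.trans h')) hj.symm
            rw [hkill _ (by omega), map_zero, mul_zero]
        have hexp : k - 1 - m + (i : ℕ) = k - 1 := by omega
        have hmain : φ ((f ^ (k - 1 - m)) x) = c i * φ ((f ^ (k - 1)) v) := by
          rw [hsum, Finset.sum_eq_single i]
          · rw [hexp]
          · intro b _ hb; exact hterm b hb
          · intro hni; exact absurd (Finset.mem_univ i) hni
        rw [hz (k - 1 - m) (by omega)] at hmain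
        rcases mul_eq_zero.mp hmain.symm with h' | h'
        · exact h'
        · exact absurd h' hφ
    have hli : LinearIndependent ℂ w := by
      rw [Fintype.linearIndependent_iff]
      intro c hc
      exact hkey c 0 hc (fun j _ => by simp)
    set W := Submodule.span ℂ (Set.range w) with hWdef
    have hWf : ∀ x ∈ W, f x ∈ W := by
      intro x hx
      induction hx using Submodule.span_induction with
      | mem y hy =>
        obtain ⟨i, rfl⟩ := hy
        by_cases hc : (i : ℕ) + 1 < k
        · have : f (w i) = w ⟨(i : ℕ) + 1, hc⟩ := by
            rw [hw]; simp only
            rw [← Module.End.mul_apply, ← pow_succ']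
          rw [this]
          exact Submodule.subset_span ⟨_, rfl⟩
        · have : f (w i) = 0 := by
            rw [hw]; simp only
            rw [← Module.End.mul_apply, ← pow_succ']
            exact hkill _ (by omega)
          rw [this]; exact W.zero_mem
      | zero => rw [map_zero]; exact W.zero_mem
      | add y z _ _ hy hz => rw [map_add]; exact W.add_mem hy hz
      | smul a y _ hy => rw [map_smul]; exact W.smul_mem a hy
    set Ψ : V →ₗ[ℂ] (Fin k → ℂ) := LinearMap.pi (fun i : Fin k => φ ∘ₗ (f ^ (i : ℕ))) with hΨ
    set U := LinearMap.ker Ψ with hUdef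
    have hUmem : ∀ x, x ∈ U ↔ ∀ i : Fin k, φ ((f ^ (i : ℕ)) x) = 0 := by
      intro x
      rw [hUdef, LinearMap.mem_ker, funext_iff]
      constructor
      · intro h i; exact h i
      · intro h i; exact h i
    have hUf : ∀ x ∈ U, f x ∈ U := by
      intro x hx
      rw [hUmem] at hx ⊢
      intro i
      have : (f ^ (i : ℕ)) (f x) = (f ^ ((i : ℕ) + 1)) x := by
        rw [pow_succ, Module.End.mul_apply]
      rw [this]
      by_cases hc : (i : ℕ) + 1 < k
      · exact hx ⟨(i : ℕ) + 1, hc⟩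
      · have : f ^ ((i : ℕ) + 1) = f ^ ((i : ℕ) + 1 - k) * f ^ k := by
          rw [← pow_add]; congr 1; omega
        rw [this, Module.End.mul_apply, hk]
        simp
    have hdisj : Disjoint W U := by
      rw [Submodule.disjoint_def]
      intro x hxW hxU
      rw [hWdef] at hxW
      obtain ⟨c, hc⟩ := (mem_span_range_iff_exists_fun ℂ).mp hxW
      have hcz := hkey c x hc (fun j hj => (hUmem x).mp hxU ⟨j, hj⟩)
      rw [← hc]
      apply Finset.sum_eq_zero
      intro i _
      rw [hcz i, zero_smul]
    have hWrank : finrank ℂ W = k := by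
      rw [hWdef, finrank_span_eq_card hli, Fintype.card_fin]
    have hUrank : finrank ℂ V ≤ k + finrank ℂ U := by
      have h1 := LinearMap.finrank_range_add_finrank_ker Ψ
      rw [← hUdef] at h1
      have h2 : finrank ℂ (LinearMap.range Ψ) ≤ k := by
        have := Submodule.finrank_le (LinearMap.range Ψ)
        rwa [Module.finrank_pi, Fintype.card_fin] at this
      omega
    have hcompl : IsCompl W U := by
      refine ⟨hdisj, ?_⟩
      rw [codisjoint_iff]
      apply Submodule.eq_top_of_finrank_eq
      have h3 := Submodule.finrank_sup_add_finrank_inf_eq W U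
      rw [hdisj.eq_bot, finrank_bot] at h3
      have h4 : finrank ℂ ↥(W ⊔ U) ≤ finrank ℂ V := Submodule.finrank_le _
      omega
    -- automorphism on W
    set bW : Basis (Fin k) ℂ W := Basis.span hli with hbW
    set gWl : W →ₗ[ℂ] W := (Basis.constr bW ℕ) (fun i => ((-1 : ℂ) ^ (i : ℕ)) • bW i)
      with hgWl
    have hgWb : ∀ i, gWl (bW i) = ((-1 : ℂ) ^ (i : ℕ)) • bW i := fun i =>
      Basis.constr_basis bW ℕ _ i
    have hinv : gWl ∘ₗ gWl = LinearMap.id := by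
      apply bW.ext
      intro i
      simp only [LinearMap.coe_comp, Function.comp_apply, LinearMap.id_apply]
      rw [hgWb, map_smul, hgWb, smul_smul, ← mul_pow]
      norm_num
    set gW : W ≃ₗ[ℂ] W := LinearEquiv.ofLinear gWl gWl hinv hinv with hgW
    have hfWb : ∀ i : Fin k, f.restrict hWf (bW i) =
        if hc : (i : ℕ) + 1 < k then bW ⟨(i : ℕ) + 1, hc⟩ else 0 := by
      intro i
      apply Subtype.coe_injective
      rw [LinearMap.restrict_apply]
      simp only
      by_cases hc : (i : ℕ) + 1 < k
      · rw [dif_pos hc]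
        rw [hbW, Basis.span_apply, Basis.span_apply]
        show f ((f ^ (i : ℕ)) v) = (f ^ ((i : ℕ) + 1)) v
        rw [← Module.End.mul_apply, ← pow_succ']
      · rw [dif_neg hc]
        rw [hbW, Basis.span_apply]
        show f ((f ^ (i : ℕ)) v) = 0
        rw [← Module.End.mul_apply, ← pow_succ']
        exact hkill _ (by omega)
    have hgWf : ∀ x : W, gW (f.restrict hWf x) = -(f.restrict hWf (gW x)) := by
      have : gWl ∘ₗ (f.restrict hWf) = -((f.restrict hWf) ∘ₗ gWl) := by
        apply bW.ext
        intro i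
        simp only [LinearMap.coe_comp, Function.comp_apply, LinearMap.neg_apply]
        rw [hfWb, hgWb, map_smul, hfWb]
        by_cases hc : (i : ℕ) + 1 < k
        · rw [dif_pos hc, hgWb]
          show ((-1 : ℂ) ^ ((i : ℕ) + 1)) • bW ⟨(i : ℕ) + 1, hc⟩ = _
          rw [pow_succ, mul_neg_one, neg_smul]
        · rw [dif_neg hc]
          simp
      intro x
      have := LinearMap.congr_fun this x
      simpa [hgW] using this
    -- automorphism on U by induction
    have hUd : finrank ℂ ↥U ≤ d := by
      have := Submodule.finrank_add_eq_of_isCompl hcompl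
      omega
    have hUnil : ∃ m, (f.restrict hUf) ^ m = 0 := by
      obtain ⟨m, hm⟩ := hnil
      refine ⟨m, ?_⟩
      apply LinearMap.ext
      intro x
      apply Subtype.coe_injective
      rw [Module.End.pow_restrict, LinearMap.restrict_apply]
      simp [hm]
    obtain ⟨gU, hgU⟩ := IH U (f.restrict hUf) hUd hUnil
    -- glue
    obtain ⟨g, hg⟩ := glue_aux f hcompl hWf hUf gW gU hgWf hgU
    exact ⟨g, hg⟩

/-- Main End-level result. -/
private lemma end_result [FiniteDimensional ℂ V] (m n : Module.End ℂ V)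
    (hm : m * m = 0) (hn : n * n = 0) :
    ∃ g : V ≃ₗ[ℂ] V, ∀ x, g ((m * n - n * m) x) = -((m * n - n * m) (g x)) := by
  classical
  set t := m * n - n * m with ht
  set a := m + n with ha
  have hta : t * a = -(a * t) := by
    have h1 : t * a = m * n * m - n * m * n := by
      rw [ht, ha, sub_mul, mul_add, mul_add]
      rw [mul_assoc m n n, hn, mul_zero, mul_assoc n m m, hm, mul_zero]
      abel
    have h2 : a * t = n * m * n - m * n * m := by
      rw [ht, ha, add_mul, mul_sub, mul_sub]
      rw [show m * (m * n) = m * m * n by rw [mul_assoc], hm, zero_mul]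
      rw [show n * (n * m) = n * n * m by rw [mul_assoc], hn, zero_mul]
      rw [show m * (n * m) = m * n * m by rw [mul_assoc]]
      rw [show n * (m * n) = n * m * n by rw [mul_assoc]]
      abel
    rw [h1, h2]
    abel
  have hcomm : Commute t (a * a) := by
    unfold Commute SemiconjBy
    calc t * (a * a) = (t * a) * a := by rw [mul_assoc]
    _ = (-(a * t)) * a := by rw [hta]
    _ = -(a * (t * a)) := by rw [neg_mul, mul_assoc]
    _ = -(a * (-(a * t))) := by rw [hta]
    _ = a * (a * t) := by rw [mul_neg, neg_neg]
    _ = (a * a) * t := by rw [mul_assoc]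
  have ht2 : t * t = (a * a) * (a * a) := by
    have e1 : t * t = m * n * (m * n) + n * m * (n * m) := by
      rw [ht, sub_mul, mul_sub, mul_sub]
      rw [show m * n * (n * m) = m * (n * n) * m by rw [mul_assoc, mul_assoc, mul_assoc], hn]
      rw [show n * m * (m * n) = n * (m * m) * n by rw [mul_assoc, mul_assoc, mul_assoc], hm]
      simp only [mul_zero, zero_mul]
      abel
    have e2 : (a * a) * (a * a) = m * n * (m * n) + n * m * (n * m) := by
      have haa : a * a = m * n + n * m := by
        rw [ha, add_mul, mul_add, mul_add, hm, hn]
        abel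
      rw [haa, add_mul, mul_add, mul_add]
      rw [show m * n * (n * m) = m * (n * n) * m by rw [mul_assoc, mul_assoc, mul_assoc], hn]
      rw [show n * m * (m * n) = n * (m * m) * n by rw [mul_assoc, mul_assoc, mul_assoc], hm]
      simp only [mul_zero, zero_mul]
      abel
    rw [e1, e2]
  -- Fitting decomposition along a
  obtain ⟨N₀, hN₀⟩ := Filter.eventually_atTop.mp (LinearMap.eventually_isCompl_ker_pow_range_pow a)
  set k := 2 * (N₀ + 1) with hkdef
  have hcompl : IsCompl (LinearMap.ker (a ^ k)) (LinearMap.range (a ^ k)) :=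
    hN₀ k (by omega)
  set p := LinearMap.range (a ^ k) with hp
  set q := LinearMap.ker (a ^ k) with hq
  have hkcomm : Commute t (a ^ k) := by
    have : a ^ k = (a * a) ^ (N₀ + 1) := by
      rw [hkdef, pow_mul, pow_two]
    rw [this]
    exact hcomm.pow_right (N₀ + 1)
  have htp : ∀ x ∈ p, t x ∈ p := by
    rintro x ⟨y, rfl⟩
    refine ⟨t y, ?_⟩
    have := LinearMap.congr_fun hkcomm.symm.eq y
    simpa [Module.End.mul_apply] using this
  have htq : ∀ x ∈ q, t x ∈ q := by
    intro x hx
    rw [hq, LinearMap.mem_ker] at hx ⊢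
    have := LinearMap.congr_fun hkcomm.eq x
    simp only [Module.End.mul_apply] at this
    rw [← this, hx, map_zero]
  have hap : ∀ x ∈ p, a x ∈ p := by
    rintro x ⟨y, rfl⟩
    refine ⟨a y, ?_⟩
    have h' : a * a ^ k = a ^ k * a := ((Commute.refl a).pow_right k).eq
    have := LinearMap.congr_fun h' y
    simpa [Module.End.mul_apply] using this.symm
  -- a is injective on p
  have hainj : Function.Injective (a.restrict hap) := by
    rw [← LinearMap.ker_eq_bot, LinearMap.ker_eq_bot']
    intro x hx0
    have hx0' : a (x : V) = 0 := by
      have := congrArg (Subtype.val) hx0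
      rwa [LinearMap.restrict_apply] at this
    have hxq : (x : V) ∈ q := by
      rw [hq, LinearMap.mem_ker]
      have hsplit : a ^ k = a ^ (k - 1) * a := by
        conv_lhs => rw [show k = (k - 1) + 1 by omega, pow_succ]
      rw [hsplit, Module.End.mul_apply, hx0', map_zero]
    have : (x : V) = 0 := by
      have hd := hcompl.disjoint
      rw [Submodule.disjoint_def] at hd
      exact hd _ hxq x.2
    exact Subtype.coe_injective this
  have hasurj : Function.Surjective (a.restrict hap) :=
    LinearMap.injective_iff_surjective.mp hainj
  set gP : p ≃ₗ[ℂ] p := LinearEquiv.ofBijective (a.restrict hap) ⟨hainj, hasurj⟩ with hgP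
  have hgPf : ∀ x : p, gP (t.restrict htp x) = -(t.restrict htp (gP x)) := by
    intro x
    rw [Subtype.ext_iff]
    have key := LinearMap.congr_fun hta (x : V)
    simp only [Module.End.mul_apply, LinearMap.neg_apply] at key
    simp only [hgP, LinearEquiv.ofBijective_apply, LinearMap.neg_apply,
      Submodule.coe_neg, LinearMap.restrict_coe_apply]
    show a (t (x : V)) = -t (a (x : V))
    rw [key, neg_neg]
  -- t is nilpotent on q
  have htqnil : ∃ m', (t.restrict htq) ^ m' = 0 := by
    refine ⟨2 * k, ?_⟩
    rw [Module.End.pow_restrict]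
    apply LinearMap.ext
    intro x
    have hx : (a ^ k) (x : V) = 0 := x.2
    have ht2k : t ^ (2 * k) = a ^ (3 * k) * a ^ k := by
      calc t ^ (2 * k) = (t * t) ^ k := by rw [← pow_two, ← pow_mul]
        _ = ((a * a) ^ 2) ^ k := by rw [ht2, pow_two]
        _ = (a * a) ^ (2 * k) := by rw [← pow_mul]
        _ = (a ^ 2) ^ (2 * k) := by rw [pow_two]
        _ = a ^ (2 * (2 * k)) := by rw [← pow_mul]
        _ = a ^ (3 * k) * a ^ k := by rw [← pow_add]; congr 1; omega
    rw [Subtype.ext_iff, LinearMap.restrict_coe_apply, ht2k, Module.End.mul_apply, hx, map_zero]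
    simp
  obtain ⟨gQ, hgQ⟩ := nilp_aux (finrank ℂ ↥q) q (t.restrict htq) le_rfl htqnil
  obtain ⟨g, hg⟩ := glue_aux t hcompl htq htp gQ gP hgQ hgPf
  exact ⟨g, hg⟩

end Aux

/-- If an `n × n` complex matrix is a commutator of two square-zero matrices,
then it is similar to its negative. -/
theorem stmt_9 {n : ℕ} (T M N : Matrix (Fin n) (Fin n) ℂ)
    (hM : M * M = 0) (hN : N * N = 0) (hT : T = M * N - N * M) :
    ∃ S : (Matrix (Fin n) (Fin n) ℂ)ˣ,
      (↑S⁻¹ : Matrix (Fin n) (Fin n) ℂ) * T * (↑S : Matrix (Fin n) (Fin n) ℂ) = -T := by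
  classical
  set E := Matrix.toLinAlgEquiv' (R := ℂ) (n := Fin n) with hE
  set m' := E M with hm'
  set n' := E N with hn'
  have hmm : m' * m' = 0 := by rw [hm', ← map_mul, hM, map_zero]
  have hnn : n' * n' = 0 := by rw [hn', ← map_mul, hN, map_zero]
  obtain ⟨g, hg⟩ := end_result m' n' hmm hnn
  set t' := m' * n' - n' * m' with ht'
  have hTt : E T = t' := by rw [hT, map_sub, map_mul, map_mul, ← hm', ← hn']
  -- the anticommuting relation at End level
  have hrel : (g : Module.End ℂ (Fin n → ℂ)) * t' = -(t' * (g : Module.End ℂ (Fin n → ℂ))) := by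
    apply LinearMap.ext
    intro x
    simpa [Module.End.mul_apply] using hg x
  -- build the matrix unit
  refine ⟨⟨E.symm (g : Module.End ℂ (Fin n → ℂ)), E.symm ((g.symm : Module.End ℂ (Fin n → ℂ))),
    ?_, ?_⟩, ?_⟩
  · rw [← map_mul, ← map_one E.symm]
    congr 1
    apply LinearMap.ext
    intro x
    simp [Module.End.mul_apply]
  · rw [← map_mul, ← map_one E.symm]
    congr 1
    apply LinearMap.ext
    intro x
    simp [Module.End.mul_apply]
  · set S := E.symm (g : Module.End ℂ (Fin n → ℂ)) with hS
    show E.symm ((g.symm : Module.End ℂ (Fin n → ℂ))) * T * S = -T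
    have hST : S * T = -(T * S) := by
      have hT' : T = E.symm t' := by rw [← hTt]; simp
      rw [hS, hT', ← map_mul, ← map_mul, hrel, map_neg]
    have hSinvval : E.symm ((g.symm : Module.End ℂ (Fin n → ℂ))) * S = 1 := by
      rw [hS, ← map_mul, ← map_one E.symm]
      congr 1
      apply LinearMap.ext
      intro x
      simp [Module.End.mul_apply]
    have hTS : T * S = -(S * T) := by rw [hST, neg_neg]
    calc E.symm ((g.symm : Module.End ℂ (Fin n → ℂ))) * T * S
        = E.symm ((g.symm : Module.End ℂ (Fin n → ℂ))) * (T * S) := by rw [mul_assoc]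
      _ = E.symm ((g.symm : Module.End ℂ (Fin n → ℂ))) * (-(S * T)) := by rw [hTS]
      _ = -(E.symm ((g.symm : Module.End ℂ (Fin n → ℂ))) * S * T) := by
          rw [mul_neg, mul_assoc]
      _ = -(1 * T) := by rw [hSinvval]
      _ = -T := by rw [one_mul]
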